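/- arXiv:2602.16332 — 4 statements merged into one kernel-verified Lean document; each statement's English description precedes it below -/
import Mathlib

section
/- Let k be a field and A a finite-dimensional semisimple k-algebra. Then A is symmetric: there exists a k-linear map σ : A → k such that σ(ab) = σ(ba) for all a, b ∈ A, and such that for every a ∈ A, if σ(ab) = 0 for all b ∈ A then a = 0. -/
open Submodule in
/-- A left ideal on which multiplication vanishes identically is zero,
in a semisimple ring. -/
lemma nil_ideal_eq_bot {A : Type*} [Ring A] [IsSemisimpleRing A]
    (L : Submodule A A) (h : ∀ x ∈ L, ∀ y ∈ L, x * y = 0) : L = ⊥ := by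
  obtain ⟨L', hc⟩ := exists_isCompl L
  set π := Submodule.projectionOnto L L' hc with hπ
  rw [eq_bot_iff]
  intro x hx
  have h1 : (π x : A) = x := by
    rw [Submodule.projectionOnto_apply_left hc ⟨x, hx⟩]
  have h2 : π x = x • π 1 := by
    rw [← map_smul, smul_eq_mul, mul_one]
  have : (x • π 1 : L) = (⟨x, hx⟩ : L) := by
    rw [← h2]; exact Subtype.ext h1
  have h3 : x * (π 1 : A) = x := by
    have := congrArg (Subtype.val) this
    simpa [smul_eq_mul] using this
  rw [Submodule.mem_bot, ← h3]
  exact h x hx _ (π 1).2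

/-- Every two-sided ideal in a semisimple ring is generated by a central idempotent
which is a two-sided identity for the ideal. -/
lemma exists_central_idem {A : Type*} [Ring A] [IsSemisimpleRing A]
    (J : Submodule A A) (hJr : ∀ x ∈ J, ∀ a, x * a ∈ J) :
    ∃ e ∈ J, (∀ x ∈ J, x * e = x) ∧ (∀ x ∈ J, e * x = x) ∧ (∀ a, a * e = e * a) := by
  obtain ⟨L', hc⟩ := exists_isCompl J
  set π := Submodule.projectionOnto J L' hc with hπ
  set e : A := (π 1 : A) with he
  have heJ : e ∈ J := (π 1).2
  have hre : ∀ x ∈ J, x * e = x := by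
    intro x hx
    have h1 : (π x : A) = x := by
      rw [Submodule.projectionOnto_apply_left hc ⟨x, hx⟩]
    have h2 : π x = x • π 1 := by rw [← map_smul, smul_eq_mul, mul_one]
    have := congrArg (Subtype.val) h2
    rw [h1] at this
    simpa [smul_eq_mul, ← he] using this.symm
  -- the set N = { x - e*x | x ∈ J } ; its span L is a nil left ideal
  set N : Set A := {y | ∃ x ∈ J, y = x - e * x} with hN
  have hNe : ∀ y ∈ N, y * e = y := by
    rintro y ⟨x, hx, rfl⟩
    rw [sub_mul, mul_assoc, hre x hx]
  have heN : ∀ y ∈ N, e * y = 0 := by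
    rintro y ⟨x, hx, rfl⟩
    have : e * (e * x) = e * x := by
      rw [← mul_assoc, hre e heJ]
    rw [mul_sub, this, sub_self]
  have hNr : ∀ y ∈ N, ∀ c, y * c ∈ N := by
    rintro y ⟨x, hx, rfl⟩ c
    exact ⟨x * c, hJr x hx c, by rw [sub_mul, mul_assoc]⟩
  have hNN : ∀ y ∈ N, ∀ z ∈ N, y * z = 0 := by
    intro y hy z hz
    rw [← hNe y hy, mul_assoc, heN z hz, mul_zero]
  set L : Submodule A A := Submodule.span A N with hL
  have hLmul : ∀ u ∈ L, ∀ v ∈ L, u * v = 0 := by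
    have key : ∀ v ∈ L, ∀ y ∈ N, y * v = 0 := by
      intro v hv
      induction hv using Submodule.span_induction with
      | mem z hz => intro y hy; exact hNN y hy z hz
      | zero => intro y _; rw [mul_zero]
      | add u w _ _ ihu ihw => intro y hy; rw [mul_add, ihu y hy, ihw y hy, add_zero]
      | smul c u _ ihu =>
        intro y hy
        rw [smul_eq_mul, ← mul_assoc]
        exact ihu (y * c) (hNr y hy c)
    intro u hu v hv
    induction hu using Submodule.span_induction with
    | mem z hz => exact key v hv z hz
    | zero => rw [zero_mul]
    | add u w _ _ ihu ihw => rw [add_mul, ihu, ihw, add_zero]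
    | smul c u _ ihu => rw [smul_eq_mul, mul_assoc, ihu, mul_zero]
  have hLbot : L = ⊥ := nil_ideal_eq_bot L hLmul
  have hle : ∀ x ∈ J, e * x = x := by
    intro x hx
    have : x - e * x ∈ L := Submodule.subset_span ⟨x, hx, rfl⟩
    rw [hLbot, Submodule.mem_bot, sub_eq_zero] at this
    exact this.symm
  refine ⟨e, heJ, hre, hle, fun a => ?_⟩
  have h1 : a * e ∈ J := J.smul_mem a heJ
  have h2 : e * a ∈ J := hJr e heJ a
  calc a * e = e * (a * e) := (hle _ h1).symm
    _ = (e * a) * e := by rw [mul_assoc]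
    _ = e * a := hre _ h2


section density
variable {K : Type*} [Field K] [IsAlgClosed K]
variable {C : Type*} [Ring C] [Algebra K C]
variable {S : Type*} [AddCommGroup S] [Module C S] [Module K S] [IsScalarTower K C S]

lemma smul_comm_KC (t : K) (c : C) (s : S) : c • (t • s) = t • (c • s) := by
  have h1 : t • s = (algebraMap K C t) • s := by rw [algebraMap_smul]
  have h2 : t • (c • s) = (algebraMap K C t) • (c • s) := by rw [algebraMap_smul]
  rw [h1, h2, ← mul_smul, ← mul_smul, Algebra.commutes]

/-- Schur's lemma over an algebraically closed field. -/
lemma schur_scalar [IsSimpleModule C S] [FiniteDimensional K S]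
    (g : S →ₗ[C] S) : ∃ t : K, ∀ s : S, g s = t • s := by
  haveI : Nontrivial S := IsSimpleModule.nontrivial C S
  haveI : SMulCommClass K C S := ⟨fun t c s => (smul_comm_KC t c s).symm⟩
  set gK : S →ₗ[K] S := g.restrictScalars K with hgK
  obtain ⟨t, ht⟩ := Module.End.exists_eigenvalue gK
  obtain ⟨v, hv, hvne⟩ := (Submodule.ne_bot_iff _).1 ht
  rw [Module.End.mem_eigenspace_iff] at hv
  refine ⟨t, fun s => ?_⟩
  set h : S →ₗ[C] S := g - t • LinearMap.id with hh
  have hker : v ∈ LinearMap.ker h := by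
    simp only [hh, LinearMap.mem_ker, LinearMap.sub_apply, LinearMap.smul_apply,
      LinearMap.id_apply]
    rw [sub_eq_zero]
    exact hv
  have : LinearMap.ker h = ⊤ := by
    rcases eq_bot_or_eq_top (LinearMap.ker h) with hb | htop
    · rw [hb, Submodule.mem_bot] at hker; exact absurd hker hvne
    · exact htop
  have hs : h s = 0 := by rw [← LinearMap.mem_ker, this]; trivial
  have := sub_eq_zero.1 (by simpa [hh] using hs)
  simpa using this

/-- Jacobson density for a simple module, f.d. over an algebraically closed field:
every `K`-linear endomorphism is given by some ring element. -/
lemma density [IsSimpleModule C S] [FiniteDimensional K S]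
    (f : S →ₗ[K] S) : ∃ c : C, ∀ s : S, f s = c • s := by
  classical
  haveI : SMulCommClass K C S := ⟨fun t c s => (smul_comm_KC t c s).symm⟩
  set n := Module.finrank K S with hn
  set bS : Module.Basis (Fin n) K S := Module.finBasis K S with hbS
  -- the Pi module
  haveI : IsSemisimpleModule C (Fin n → S) :=
    isSemisimpleModule_of_isSemisimpleModule_submodule'
      (p := fun i => LinearMap.range (LinearMap.single C (fun _ : Fin n => S) i))
      (fun i => IsSemisimpleModule.range _)
      (by simp_rw [LinearMap.range_eq_map, Submodule.iSup_map_single, Submodule.pi_top])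
  set v : Fin n → S := fun i => bS i with hv
  set Nv : Submodule C (Fin n → S) := Submodule.span C {v} with hNv
  obtain ⟨N', hc⟩ := exists_isCompl Nv
  set P : (Fin n → S) →ₗ[C] (Fin n → S) :=
    Nv.subtype.comp (Submodule.projectionOnto Nv N' hc) with hP
  have hPid : ∀ x ∈ Nv, P x = x := fun x hx => by
    simp [hP, Submodule.projectionOnto_apply_left hc ⟨x, hx⟩]
  -- components of P are scalars
  have hcomp : ∀ i j : Fin n, ∃ t : K, ∀ s : S,
      P (Pi.single j s) i = t • s := by
    intro i j
    obtain ⟨t, ht⟩ := schur_scalar (K := K)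
      ((LinearMap.proj i).comp (P.comp (LinearMap.single C (fun _ : Fin n => S) j)))
    exact ⟨t, fun s => ht s⟩
  choose t ht using hcomp
  have hPx : ∀ x : Fin n → S, ∀ i, P x i = ∑ j, t i j • x j := by
    intro x i
    have hx : x = ∑ j, Pi.single j (x j) := by
      rw [Finset.univ_sum_single]
    conv_lhs => rw [hx]
    rw [map_sum]
    rw [Finset.sum_apply]
    exact Finset.sum_congr rfl fun j _ => ht i j (x j)
  -- F : apply f coordinatewise
  set F : (Fin n → S) → (Fin n → S) := fun x i => f (x i) with hF
  have hvNv : v ∈ Nv := Submodule.mem_span_singleton_self v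
  have hFv : F v ∈ Nv := by
    have key : P (F v) = F v := by
      funext i
      rw [hPx (F v) i]
      have : ∑ j, t i j • F v j = f (∑ j, t i j • v j) := by
        rw [map_sum]
        exact Finset.sum_congr rfl fun j _ => (f.map_smul (t i j) (v j)).symm
      rw [hF] at this ⊢
      rw [this, ← hPx v i, hPid v hvNv]
    rw [← key]
    exact (Submodule.projectionOnto Nv N' hc (F v)).2
  obtain ⟨c, hcv⟩ := Submodule.mem_span_singleton.1 hFv
  refine ⟨c, fun s => ?_⟩
  -- f and (c • ·) agree on the basis
  have hbasis : ∀ i, f (bS i) = c • bS i := by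
    intro i
    have := congrFun hcv i
    simpa [hF, hv] using this.symm
  -- conclude via linearity
  have : f = { toFun := fun s => c • s,
               map_add' := fun x y => smul_add c x y,
               map_smul' := fun m x => smul_comm_KC m c x : S →ₗ[K] S} := by
    apply bS.ext
    intro i
    exact hbasis i
  rw [this]
  rfl

end density


/-- In a nonzero f.d. algebra over an algebraically closed field, for any nonzero
central idempotent `e'` there is a trace-like functional not killing `e' * C`. -/
lemma exists_trace_ne_of_central_idem {K : Type*} [Field K] [IsAlgClosed K]
    {C : Type*} [Ring C] [Algebra K C] [FiniteDimensional K C]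
    (e' : C) (hne : e' ≠ 0) (he2 : e' * e' = e') (hcen : ∀ c, c * e' = e' * c) :
    ∃ T : C →ₗ[K] K, (∀ c d : C, T (c * d) = T (d * c)) ∧ ∃ c : C, T (e' * c) ≠ 0 := by
  classical
  -- a maximal left ideal containing 1 - e'
  have hU : Submodule.span C {(1 : C) - e'} ≠ ⊤ := by
    intro h
    have h1 : (1 : C) ∈ Submodule.span C {(1 : C) - e'} := h ▸ Submodule.mem_top
    obtain ⟨c, hc⟩ := Submodule.mem_span_singleton.1 h1
    rw [smul_eq_mul] at hc
    have : e' = 0 := by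
      calc e' = 1 * e' := (one_mul _).symm
        _ = (c * (1 - e')) * e' := by rw [hc]
        _ = c * (e' - e' * e') := by rw [mul_assoc, sub_mul, one_mul]
        _ = 0 := by rw [he2, sub_self, mul_zero]
    exact hne this
  haveI : IsNoetherian C C := isNoetherian_of_tower K inferInstance
  haveI : IsCoatomic (Submodule C C) :=
    isCoatomic_of_orderTop_gt_wellFounded (wellFounded_gt)
  obtain ⟨m, hm, hUm⟩ :=
    (eq_top_or_exists_le_coatom (Submodule.span C {(1 : C) - e'})).resolve_left hU
  let S := C ⧸ m
  haveI : IsSimpleModule C S := (isSimpleModule_iff_isCoatom).2 hm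
  haveI : Module.Finite K S :=
    Module.Finite.of_surjective ((m.mkQ).restrictScalars K) (Submodule.mkQ_surjective m)
  -- the action of C on S by K-linear maps
  have hsc : ∀ (t : K) (c : C) (s : S), c • (t • s) = t • (c • s) := by
    intro t c s
    have h1 : t • s = (algebraMap K C t) • s := by rw [algebraMap_smul]
    have h2 : t • (c • s) = (algebraMap K C t) • (c • s) := by rw [algebraMap_smul]
    rw [h1, h2, ← mul_smul, ← mul_smul, Algebra.commutes]
  let ℓ : C →ₗ[K] (S →ₗ[K] S) :=
    { toFun := fun c =>
        { toFun := fun s => c • s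
          map_add' := fun x y => smul_add c x y
          map_smul' := fun t s => hsc t c s }
      map_add' := fun c d => LinearMap.ext fun s => add_smul c d s
      map_smul' := fun t c => LinearMap.ext fun s => smul_assoc t c s }
  have hℓmul : ∀ c d : C, ℓ (c * d) = (ℓ c) * (ℓ d) :=
    fun c d => LinearMap.ext fun s => mul_smul c d s
  set Tr := LinearMap.trace K S with hTr
  set T : C →ₗ[K] K := Tr.comp ℓ with hT
  have hTapp : ∀ c : C, T c = Tr (ℓ c) := fun c => rfl
  -- e' acts as the identity on S
  have hid : ∀ s : S, e' • s = s := by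
    intro s
    obtain ⟨c, rfl⟩ := Submodule.mkQ_surjective m s
    show Submodule.Quotient.mk (e' * c) = Submodule.Quotient.mk c
    rw [Submodule.Quotient.eq]
    have h1 : e' * c - c = -(c • ((1 : C) - e')) := by
      rw [smul_eq_mul, mul_sub, mul_one, ← hcen c, neg_sub]
    rw [h1]
    exact m.neg_mem (m.smul_mem c (hUm (Submodule.mem_span_singleton_self _)))
  -- some element of C has nonzero trace
  haveI : Nontrivial S := IsSimpleModule.nontrivial C S
  obtain ⟨s₀, hs₀⟩ := exists_ne (0 : S)
  have hφ : ∃ φ : Module.Dual K S, φ s₀ ≠ 0 := by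
    have := (Module.forall_dual_apply_eq_zero_iff K s₀).not.2 hs₀
    push_neg at this; exact this
  obtain ⟨φ, hφ⟩ := hφ
  let f₀ : S →ₗ[K] S := dualTensorHom K S S (φ ⊗ₜ[K] s₀)
  have htrf₀ : Tr f₀ = φ s₀ := by
    rw [hTr, LinearMap.trace_eq_contract_apply, contractLeft_apply]
  obtain ⟨c₀, hc₀⟩ := density (K := K) (C := C) (S := S) f₀
  have hℓc₀ : ℓ c₀ = f₀ := LinearMap.ext fun s => (hc₀ s).symm
  refine ⟨T, fun c d => ?_, c₀, ?_⟩
  · rw [hTapp, hTapp, hℓmul, hℓmul]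
    exact LinearMap.trace_mul_comm K _ _
  · have h2 : T (e' * c₀) = Tr (ℓ c₀) := by
      rw [hTapp, hℓmul]
      congr 1
      apply LinearMap.ext
      intro s
      show (ℓ e') ((ℓ c₀) s) = (ℓ c₀) s
      exact hid _
    rw [h2, hℓc₀, htrf₀]
    exact hφ


open TensorProduct in
lemma exists_traceform_ne (k : Type*) [Field k] (A : Type*) [Ring A] [Algebra k A]
    [FiniteDimensional k A] (e : A) (he : e ≠ 0) (he2 : e * e = e)
    (hec : ∀ a, a * e = e * a) :
    ∃ (τ : A →ₗ[k] k) (b : A), (∀ a b : A, τ (a * b) = τ (b * a)) ∧ τ (e * b) ≠ 0 := by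
  classical
  set K := AlgebraicClosure k
  let C := K ⊗[k] A
  let e' : C := (1 : K) ⊗ₜ[k] e
  have hg : ∃ g : K →ₗ[k] k, g 1 = 1 := by
    have h1 : (1 : K) ≠ 0 := one_ne_zero
    have := (Module.forall_dual_apply_eq_zero_iff k (1 : K)).not.2 h1
    push_neg at this
    obtain ⟨φ, hφ⟩ := this
    exact ⟨(φ 1)⁻¹ • φ, by simp [inv_mul_cancel₀ hφ]⟩
  obtain ⟨g, hg1⟩ := hg
  have he'ne : e' ≠ 0 := by
    intro h
    have h2 : (TensorProduct.lid k A) ((TensorProduct.map g LinearMap.id) ((1:K) ⊗ₜ[k] e)) = e := by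
      rw [TensorProduct.map_tmul, hg1, LinearMap.id_apply, TensorProduct.lid_tmul, one_smul]
    rw [show ((1:K) ⊗ₜ[k] e) = (0 : C) from h, map_zero, map_zero] at h2
    exact he h2.symm
  have hcen' : ∀ c : C, c * e' = e' * c := by
    intro c
    induction c using TensorProduct.induction_on with
    | zero => rw [zero_mul, mul_zero]
    | tmul t a =>
      show (t ⊗ₜ[k] a) * ((1:K) ⊗ₜ[k] e) = ((1:K) ⊗ₜ[k] e) * (t ⊗ₜ[k] a)
      rw [Algebra.TensorProduct.tmul_mul_tmul, Algebra.TensorProduct.tmul_mul_tmul,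
        mul_one, one_mul, hec]
    | add x y hx hy => rw [add_mul, mul_add, hx, hy]
  have he2' : e' * e' = e' := by
    show ((1:K) ⊗ₜ[k] e) * ((1:K) ⊗ₜ[k] e) = (1:K) ⊗ₜ[k] e
    rw [Algebra.TensorProduct.tmul_mul_tmul, mul_one, he2]
  haveI : Module.Finite K C := Module.Finite.base_change k K A
  obtain ⟨T, hTtr, c₀, hTc₀⟩ := exists_trace_ne_of_central_idem (K := K) (C := C) e' he'ne he2' hcen'
  -- μ : restriction of T to A
  let μ : A →ₗ[k] K :=
    { toFun := fun a => T ((1 : K) ⊗ₜ[k] a)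
      map_add' := by
        intro a b
        show T ((1:K) ⊗ₜ[k] (a + b)) = T ((1:K) ⊗ₜ[k] a) + T ((1:K) ⊗ₜ[k] b)
        rw [TensorProduct.tmul_add, map_add]
      map_smul' := by
        intro t a
        show T ((1:K) ⊗ₜ[k] (t • a)) = t • T ((1:K) ⊗ₜ[k] a)
        rw [TensorProduct.tmul_smul, ← algebraMap_smul K t ((1:K) ⊗ₜ[k] a : C),
          map_smul, algebraMap_smul] }
  have hμapp : ∀ a : A, μ a = T ((1 : K) ⊗ₜ[k] a) := fun a => rfl
  have htmul : ∀ x y : A, ((1:K) ⊗ₜ[k] (x * y) : C) = ((1:K) ⊗ₜ[k] x) * ((1:K) ⊗ₜ[k] y) := by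
    intro x y
    rw [Algebra.TensorProduct.tmul_mul_tmul, mul_one]
  have hμtr : ∀ a b : A, μ (a * b) = μ (b * a) := by
    intro a b
    rw [hμapp, hμapp, htmul, htmul, hTtr]
  have hmain : ∃ b : A, μ (e * b) ≠ 0 := by
    by_contra hcon
    push_neg at hcon
    have hz : ∀ c : C, T (e' * c) = 0 := by
      intro c
      induction c using TensorProduct.induction_on with
      | zero => rw [mul_zero, map_zero]
      | tmul t a =>
        have h1 : e' * (t ⊗ₜ[k] a) = t • (((1:K) ⊗ₜ[k] (e * a)) : C) := by
          show ((1:K) ⊗ₜ[k] e) * (t ⊗ₜ[k] a) = _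
          rw [Algebra.TensorProduct.tmul_mul_tmul, one_mul, TensorProduct.smul_tmul',
            smul_eq_mul, mul_one]
        have h2 := hcon a
        rw [hμapp] at h2
        rw [h1, map_smul, h2, smul_zero]
      | add x y hx hy => rw [mul_add, map_add, hx, hy, add_zero]
    exact hTc₀ (hz c₀)
  obtain ⟨b₀, hb₀⟩ := hmain
  have hπ : ∃ π : K →ₗ[k] k, π (μ (e * b₀)) ≠ 0 := by
    have := (Module.forall_dual_apply_eq_zero_iff k (μ (e * b₀))).not.2 hb₀
    push_neg at this; exact this
  obtain ⟨π, hπ⟩ := hπ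
  refine ⟨π.comp μ, b₀, fun a b => ?_, hπ⟩
  show π (μ (a * b)) = π (μ (b * a))
  rw [hμtr]

section main
variable (k : Type*) [Field k] (A : Type*) [Ring A] [Algebra k A]

/-- radical of a bilinearised linear form, as a k-submodule -/
def Radk (σ : A →ₗ[k] k) : Submodule k A where
  carrier := {a | ∀ b, σ (a * b) = 0}
  add_mem' := by intro a a' ha ha' b; rw [add_mul, map_add, ha b, ha' b, add_zero]
  zero_mem' := by intro b; rw [zero_mul, map_zero]
  smul_mem' := by intro t a ha b; rw [smul_mul_assoc, map_smul, ha b, smul_zero]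

lemma mem_Radk {σ : A →ₗ[k] k} {a : A} : a ∈ Radk k A σ ↔ ∀ b, σ (a * b) = 0 := Iff.rfl

theorem semisimple_algebra_is_symmetric'
    [FiniteDimensional k A] [IsSemisimpleRing A] :
    ∃ σ : A →ₗ[k] k,
      (∀ a b : A, σ (a * b) = σ (b * a)) ∧
      (∀ a : A, (∀ b : A, σ (a * b) = 0) → a = 0) := by
  classical
  set Sf : Set ℕ := {n | ∃ σ : A →ₗ[k] k, (∀ a b : A, σ (a * b) = σ (b * a)) ∧
      n = Module.finrank k (Radk k A σ)} with hSf
  have hne : Sf.Nonempty := ⟨_, 0, fun _ _ => rfl, rfl⟩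
  obtain ⟨σ₀, hσ₀, hrank⟩ := Nat.sInf_mem hne
  refine ⟨σ₀, hσ₀, fun a ha => ?_⟩
  suffices hbot : Radk k A σ₀ = ⊥ by
    have : a ∈ Radk k A σ₀ := ha
    rwa [hbot, Submodule.mem_bot] at this
  by_contra hbot
  -- J : the radical as a left ideal
  set J : Submodule A A :=
    { carrier := {a | ∀ b, σ₀ (a * b) = 0}
      add_mem' := by intro a a' ha ha' b; rw [add_mul, map_add, ha b, ha' b, add_zero]
      zero_mem' := by intro b; rw [zero_mul, map_zero]
      smul_mem' := by
        intro c a ha b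
        rw [smul_eq_mul, mul_assoc, hσ₀ c (a * b), mul_assoc]
        exact ha (b * c) } with hJ
  have hJr : ∀ x ∈ J, ∀ a, x * a ∈ J := by
    intro x hx a b
    rw [mul_assoc]; exact hx (a * b)
  obtain ⟨e, heJ, hre, hle, hcen⟩ := exists_central_idem J hJr
  have hee : e * e = e := hre e heJ
  have hene : e ≠ 0 := by
    obtain ⟨x, hx, hxne⟩ := (Submodule.ne_bot_iff _).1 hbot
    intro h
    exact hxne (by rw [← hre x hx, h, mul_zero])
  obtain ⟨τ, b₀, hτ, hτne⟩ := exists_traceform_ne k A e hene hee hcen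
  set ρ : A →ₗ[k] k := σ₀ + τ.comp (LinearMap.mulLeft k e) with hρ
  have hρapp : ∀ x, ρ x = σ₀ x + τ (e * x) := fun x => rfl
  have hρtr : ∀ a b : A, ρ (a * b) = ρ (b * a) := by
    intro a b
    rw [hρapp, hρapp]
    congr 1
    · exact hσ₀ a b
    · calc τ (e * (a * b)) = τ ((e * a) * b) := by rw [mul_assoc]
        _ = τ (b * (e * a)) := hτ _ _
        _ = τ (e * (b * a)) := by rw [← mul_assoc, hcen b, mul_assoc]
  -- step 1 : Rad ρ ⊆ Rad σ₀, and x ∈ Rad ρ → e*x = x → x ∈ Rad τ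
  have step1 : ∀ x, (∀ b, ρ (x * b) = 0) → ∀ b, σ₀ (x * b) = 0 := by
    intro x hx b
    have h1 : σ₀ (x * (b * e)) = 0 := by
      rw [← mul_assoc, hσ₀ (x * b) e]
      exact heJ (x * b)
    have h5 : e * (x * b) * e = e * (x * b) := by
      rw [hcen (e * (x * b)), ← mul_assoc, hee]
    have key : τ (e * (x * (b - b * e))) = 0 := by
      have h3 : e * (x * (b - b * e)) = e * (x * b) - e * (x * b) * e := by noncomm_ring
      rw [h3, h5, sub_self, map_zero]
    have h2 := hx (b - b * e)
    rw [hρapp, key, add_zero] at h2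
    have h4 : x * (b - b * e) = x * b - x * (b * e) := by noncomm_ring
    rw [h4, map_sub, h1, sub_zero] at h2
    exact h2
  have step2 : ∀ x, (∀ b, ρ (x * b) = 0) → (∀ b, σ₀ (x * b) = 0) → ∀ b, τ (x * b) = 0 := by
    intro x hx hx0 b
    have hxJ : x ∈ J := hx0
    have := hx b
    rw [hρapp, hx0 b, zero_add, ← mul_assoc, hle x hxJ] at this
    exact this
  -- e ∈ Rad σ₀ but e ∉ Rad ρ
  have heρ : ¬ (∀ b, ρ (e * b) = 0) := by
    intro h
    exact hτne (step2 e h (step1 e h) b₀)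
  have hlt : Radk k A ρ < Radk k A σ₀ := by
    constructor
    · intro x hx
      exact step1 x hx
    · intro hsub
      exact heρ (hsub heJ)
  have hmem : Module.finrank k (Radk k A ρ) ∈ Sf := ⟨ρ, hρtr, rfl⟩
  have := Nat.sInf_le hmem
  have hstrict := Submodule.finrank_lt_finrank_of_lt hlt
  omega

end main


/-- Every finite-dimensional semisimple algebra over a field is symmetric:
it admits a symmetrising form, i.e. a `k`-linear map `σ : A → k` with
`σ (a * b) = σ (b * a)` for all `a b`, and such that `σ (a * b) = 0` for all `b`
implies `a = 0`. -/
theorem semisimple_algebra_is_symmetric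
    (k : Type*) [Field k] (A : Type*) [Ring A] [Algebra k A]
    [FiniteDimensional k A] [IsSemisimpleRing A] :
    ∃ σ : A →ₗ[k] k,
      (∀ a b : A, σ (a * b) = σ (b * a)) ∧
      (∀ a : A, (∀ b : A, σ (a * b) = 0) → a = 0) := by
  exact semisimple_algebra_is_symmetric' k A
end

section
/- Let k be a field and B a division ring which is a finite-dimensional k-algebra. Then B is symmetric: there exists a k-linear map σ : B → k such that σ(ab) = σ(ba) for all a, b ∈ B, and such that for every a ∈ B, if σ(ab) = 0 for all b ∈ B then a = 0. -/
open LinearMap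

section Aux

variable {Z B : Type*} [Field Z] [DivisionRing B] [Algebra Z B]

/-- Artin–Whaples style independence lemma: if `b i` are linearly independent over the
center and `∑ i, a i * x * b i = 0` for all `x`, then all `a i = 0`. -/
lemma aux_indep (hZ : ∀ u : B, (∀ y : B, u * y = y * u) → ∃ z : Z, algebraMap Z B z = u) :
    ∀ (n : ℕ) (a b : Fin n → B), LinearIndependent Z b →
      (∀ x : B, ∑ i, a i * x * b i = 0) → ∀ i, a i = 0 := by
  intro n
  induction n with
  | zero => intro a b _ _ i; exact i.elim0
  | succ n ih =>
    intro a b hb hrel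
    by_contra hne
    push_neg at hne
    obtain ⟨i₀, hi₀⟩ := hne
    set a' : Fin (n + 1) → B := fun i => (a i₀)⁻¹ * a i with ha'
    have hrel' : ∀ x : B, ∑ i, a' i * x * b i = 0 := by
      intro x
      have : ∑ i, a' i * x * b i = (a i₀)⁻¹ * ∑ i, a i * x * b i := by
        rw [Finset.mul_sum]
        exact Finset.sum_congr rfl fun i _ => by simp only [ha', mul_assoc]
      rw [this, hrel, mul_zero]
    have ha'i₀ : a' i₀ = 1 := inv_mul_cancel₀ hi₀
    have hcomm : ∀ (y : B) (i : Fin (n + 1)), a' i * y = y * a' i := by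
      intro y
      have key : ∀ x : B, ∑ i, (a' i * y - y * a' i) * x * b i = 0 := by
        intro x
        have h1 := hrel' (y * x)
        have h2 := hrel' x
        have : ∑ i, (a' i * y - y * a' i) * x * b i
            = (∑ i, a' i * (y * x) * b i) - y * ∑ i, a' i * x * b i := by
          rw [Finset.mul_sum, ← Finset.sum_sub_distrib]
          exact Finset.sum_congr rfl fun i _ => by simp only [sub_mul, mul_assoc]
        rw [this, h1, h2, mul_zero, sub_zero]
      have key2 : ∀ x : B, ∑ j : Fin n,
          (a' (i₀.succAbove j) * y - y * a' (i₀.succAbove j)) * x * b (i₀.succAbove j) = 0 := by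
        intro x
        have h := key x
        rw [Fin.sum_univ_succAbove _ i₀] at h
        simpa [ha'i₀] using h
      have hbind : LinearIndependent Z (b ∘ i₀.succAbove) :=
        hb.comp _ Fin.succAbove_right_injective
      have hz := ih (fun j => a' (i₀.succAbove j) * y - y * a' (i₀.succAbove j))
        (b ∘ i₀.succAbove) hbind key2
      intro i
      rcases eq_or_ne i i₀ with rfl | h
      · rw [ha'i₀, one_mul, mul_one]
      · obtain ⟨j, rfl⟩ := Fin.exists_succAbove_eq h
        have := hz j
        rwa [sub_eq_zero] at this
    choose z hzz using fun i => hZ (a' i) (fun y => hcomm y i)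
    have hsum : ∑ i, z i • b i = 0 := by
      have h1 := hrel' 1
      calc ∑ i, z i • b i = ∑ i, a' i * 1 * b i := by
            refine Finset.sum_congr rfl fun i _ => ?_
            rw [Algebra.smul_def, hzz, mul_one]
        _ = 0 := h1
    have hall := Fintype.linearIndependent_iff.mp hb z hsum
    have : (1 : B) = 0 := by
      rw [← ha'i₀, ← hzz i₀, hall i₀, map_zero]
    exact one_ne_zero this

variable [FiniteDimensional Z B]

/-- There exist `a b` such that the trace of `x ↦ a * x * b` is nonzero. -/
lemma aux_exists_trace_ne
    (hZ : ∀ u : B, (∀ y : B, u * y = y * u) → ∃ z : Z, algebraMap Z B z = u) :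
    ∃ a b : B, trace Z B (mulLeft Z a ∘ₗ mulRight Z b) ≠ 0 := by
  by_contra h
  push_neg at h
  have hnt : Nontrivial B := inferInstance
  set d := Module.finrank Z B with hd
  have hdpos : 0 < d := Module.finrank_pos
  let bas : Module.Basis (Fin d) Z B := Module.finBasis Z B
  set f : Fin d × Fin d → (B →ₗ[Z] B) :=
    fun p => mulLeft Z (bas p.1) ∘ₗ mulRight Z (bas p.2) with hf
  have hind : LinearIndependent Z f := by
    rw [Fintype.linearIndependent_iff]
    intro g hg p
    have hrel : ∀ x : B, ∑ j : Fin d, (∑ i : Fin d, g (i, j) • bas i) * x * bas j = 0 := by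
      intro x
      have happ : ∑ q : Fin d × Fin d, g q • (bas q.1 * x * bas q.2) = 0 := by
        have := congrArg (fun φ : B →ₗ[Z] B => φ x) hg
        simpa [hf, Finset.sum_apply, mul_assoc] using this
      calc ∑ j : Fin d, (∑ i : Fin d, g (i, j) • bas i) * x * bas j
          = ∑ j : Fin d, ∑ i : Fin d, g (i, j) • (bas i * x * bas j) := by
            refine Finset.sum_congr rfl fun j _ => ?_
            rw [Finset.sum_mul, Finset.sum_mul]
            exact Finset.sum_congr rfl fun i _ => by
              rw [smul_mul_assoc, smul_mul_assoc]
        _ = ∑ q : Fin d × Fin d, g q • (bas q.1 * x * bas q.2) := by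
            rw [Finset.sum_comm]
            rw [← Finset.sum_product']
            rfl
        _ = 0 := happ
    have hcols := aux_indep hZ d (fun j => ∑ i : Fin d, g (i, j) • bas i) bas
      bas.linearIndependent hrel
    have := Fintype.linearIndependent_iff.mp bas.linearIndependent
      (fun i => g (i, p.2)) (hcols p.2)
    simpa using this p.1
  have hcard : Fintype.card (Fin d × Fin d) = Module.finrank Z (B →ₗ[Z] B) := by
    simp [Module.finrank_linearMap, hd]
  have : Nonempty (Fin d × Fin d) := ⟨(⟨0, hdpos⟩, ⟨0, hdpos⟩)⟩
  have hspan := hind.span_eq_top_of_card_eq_finrank hcard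
  have htr0 : (trace Z B : (B →ₗ[Z] B) →ₗ[Z] Z) = 0 := by
    have hle : Submodule.span Z (Set.range f) ≤ ker (trace Z B) := by
      rw [Submodule.span_le]
      rintro _ ⟨p, rfl⟩
      exact h (bas p.1) (bas p.2)
    rw [hspan] at hle
    ext φ
    exact hle Submodule.mem_top
  -- but trace is nonzero: the matrix unit `E₀₀` has trace 1
  set i0 : Fin d := ⟨0, hdpos⟩
  have h1 : trace Z B (Matrix.toLin bas bas (Matrix.single i0 i0 1)) = 1 := by
    rw [trace_eq_matrix_trace Z bas, LinearMap.toMatrix_toLin]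
    simp [Matrix.trace, Matrix.diag, Matrix.single]
  rw [htr0] at h1
  simp at h1

omit [FiniteDimensional Z B] in
/-- Symmetry of the trace form. -/
lemma aux_symm (x y c : B) :
    trace Z B (mulLeft Z (x * y) ∘ₗ mulRight Z c)
      = trace Z B (mulLeft Z (y * x) ∘ₗ mulRight Z c) := by
  have hL : ∀ u v : B, mulLeft Z (u * v) = mulLeft Z u * mulLeft Z v := fun u v => by
    ext w; simp [mul_assoc]
  have hcomm : ∀ u v : B, mulRight Z v * mulLeft Z u = mulLeft Z u * mulRight Z v :=
    fun u v => (commute_mulLeft_right u v).symm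
  calc trace Z B (mulLeft Z (x * y) ∘ₗ mulRight Z c)
      = trace Z B (mulLeft Z x * mulLeft Z y * mulRight Z c) := by
        rw [← Module.End.mul_eq_comp, hL]
    _ = trace Z B ((mulLeft Z y * mulRight Z c) * mulLeft Z x) := by
        rw [mul_assoc, trace_mul_comm]
    _ = trace Z B (mulLeft Z y * mulLeft Z x * mulRight Z c) := by
        rw [mul_assoc, hcomm, ← mul_assoc]
    _ = trace Z B (mulLeft Z (y * x) ∘ₗ mulRight Z c) := by
        rw [← hL, Module.End.mul_eq_comp]

end Aux

/-- Every finite-dimensional division algebra over a field is symmetric: it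
admits a symmetrising form. -/
theorem division_algebra_is_symmetric
    (k : Type*) [Field k] (B : Type*) [DivisionRing B] [Algebra k B]
    [FiniteDimensional k B] :
    ∃ σ : B →ₗ[k] k,
      (∀ a b : B, σ (a * b) = σ (b * a)) ∧
      (∀ a : B, (∀ b : B, σ (a * b) = 0) → a = 0) := by
  classical
  letI Z := Subring.center B
  letI : Field Z := (IsSimpleRing.isField_center B).toField
  letI : Algebra Z B := RingHom.toAlgebra' (Subring.center B).subtype
    (fun c x => (Subring.mem_center_iff.mp c.2 x).symm)
  have hZ : ∀ u : B, (∀ y : B, u * y = y * u) → ∃ z : Z, algebraMap Z B z = u := by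
    intro u hu
    exact ⟨⟨u, Subring.mem_center_iff.mpr fun g => (hu g).symm⟩, rfl⟩
  letI : Algebra k Z := RingHom.toAlgebra
    { toFun := fun c => ⟨algebraMap k B c,
        Subring.mem_center_iff.mpr fun g => (Algebra.commutes c g).symm⟩
      map_one' := by ext; simp
      map_mul' := fun x y => by ext; simp
      map_zero' := by ext; simp
      map_add' := fun x y => by ext; simp }
  letI : IsScalarTower k Z B := IsScalarTower.of_algebraMap_eq (fun c => rfl)
  letI : FiniteDimensional Z B := Module.Finite.right k Z B
  obtain ⟨a₀, b₀, htr⟩ := aux_exists_trace_ne hZ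
  set T : B → Z := fun x => trace Z B (mulLeft Z x ∘ₗ mulRight Z b₀) with hT
  have hz₀ : T a₀ ≠ 0 := htr
  have hμ : ∃ μ : Module.Dual k Z, μ (T a₀) ≠ 0 := by
    by_contra hc
    push_neg at hc
    exact hz₀ ((Module.forall_dual_apply_eq_zero_iff k (T a₀)).mp hc)
  obtain ⟨μ, hμ⟩ := hμ
  have hTadd : ∀ x y : B, T (x + y) = T x + T y := by
    intro x y
    have : mulLeft Z (x + y) ∘ₗ mulRight Z b₀
        = mulLeft Z x ∘ₗ mulRight Z b₀ + mulLeft Z y ∘ₗ mulRight Z b₀ := by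
      ext w; simp [add_mul]
    rw [hT]
    simp only [this, map_add]
  have hTsmul : ∀ (c : k) (x : B), T (c • x) = c • T x := by
    intro c x
    have : mulLeft Z (c • x) ∘ₗ mulRight Z b₀
        = (algebraMap k Z c) • (mulLeft Z x ∘ₗ mulRight Z b₀) := by
      ext w
      simp only [LinearMap.comp_apply, LinearMap.smul_apply, mulLeft_apply, mulRight_apply]
      rw [Algebra.smul_def, Algebra.smul_def, ← IsScalarTower.algebraMap_apply]
      simp [mul_assoc]
    rw [hT]
    simp only [this, map_smul]
    rw [algebraMap_smul]
  set σ : B →ₗ[k] k :=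
    { toFun := fun x => μ (T x)
      map_add' := fun x y => by simp only [hTadd, map_add]
      map_smul' := fun c x => by simp only [hTsmul, map_smul, RingHom.id_apply] } with hσ
  refine ⟨σ, ?_, ?_⟩
  · intro a b
    exact congrArg μ (aux_symm a b b₀)
  · intro a ha
    by_contra h0
    have := ha (a⁻¹ * a₀)
    rw [← mul_assoc, mul_inv_cancel₀ h0, one_mul] at this
    exact hμ this
end

section
/- Let k be a field, A a finite-dimensional semisimple k-algebra, and X, Y finite-dimensional left A-modules (with compatible k-structure). Then there is a k-linear isomorphism between Hom_A(X, Y) and the k-linear dual of Hom_A(Y, X); equivalently, there exists a k-bilinear pairing Hom_A(X, Y) × Hom_A(Y, X) → k which is nondegenerate in both arguments. -/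
universe u v

section HDPAux

variable (k : Type*) [Field k] (A : Type*) [Ring A] [Algebra k A]

/-- Conjugation by `A`-linear equivalences is a `k`-linear equivalence of hom spaces. -/
def hdpConjEquiv
    {X : Type*} [AddCommGroup X] [Module A X] [Module k X] [IsScalarTower k A X]
    {Y : Type*} [AddCommGroup Y] [Module A Y] [Module k Y] [IsScalarTower k A Y]
    {X' : Type*} [AddCommGroup X'] [Module A X'] [Module k X'] [IsScalarTower k A X']
    {Y' : Type*} [AddCommGroup Y'] [Module A Y'] [Module k Y'] [IsScalarTower k A Y']
    (e₁ : X ≃ₗ[A] X') (e₂ : Y ≃ₗ[A] Y') : (X →ₗ[A] Y) ≃ₗ[k] (X' →ₗ[A] Y') where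
  toFun f := e₂.toLinearMap ∘ₗ f ∘ₗ e₁.symm.toLinearMap
  invFun f := e₂.symm.toLinearMap ∘ₗ f ∘ₗ e₁.toLinearMap
  map_add' f g := by ext x; simp
  map_smul' c f := by
    ext x; simp
    rw [algebra_compatible_smul A c (f (e₁.symm x)), map_smul, algebraMap_smul]
  left_inv f := by ext x; simp
  right_inv f := by ext x; simp

variable {X : Type*} [AddCommGroup X] [Module A X] [Module k X] [IsScalarTower k A X]
variable {Y : Type*} [AddCommGroup Y] [Module A Y] [Module k Y] [IsScalarTower k A Y]

lemma hdp_fd [FiniteDimensional k X] [FiniteDimensional k Y] :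
    FiniteDimensional k (X →ₗ[A] Y) :=
  FiniteDimensional.of_injective (LinearMap.restrictScalarsₗ k A X Y k)
    (LinearMap.restrictScalars_injective k)

lemma hdp_sub_left [Subsingleton X] : Subsingleton (X →ₗ[A] Y) :=
  ⟨fun f g => by ext x; rw [Subsingleton.elim x 0]; simp⟩

lemma hdp_sub_right [Subsingleton Y] : Subsingleton (X →ₗ[A] Y) :=
  ⟨fun f g => by ext x; exact Subsingleton.elim _ _⟩

/-- Schur: for simple modules the hom spaces in both directions have the same dimension. -/
lemma hdp_simple_simple [IsSimpleModule A X] [IsSimpleModule A Y] :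
    Module.finrank k (X →ₗ[A] Y) = Module.finrank k (Y →ₗ[A] X) := by
  by_cases h : ∃ f : X →ₗ[A] Y, f ≠ 0
  · obtain ⟨f, hf⟩ := h
    have hb := f.bijective_or_eq_zero.resolve_right hf
    exact (hdpConjEquiv k A (LinearEquiv.ofBijective f hb)
      (LinearEquiv.ofBijective f hb).symm).finrank_eq
  · push_neg at h
    have h' : ∀ g : Y →ₗ[A] X, g = 0 := by
      intro g
      rcases g.bijective_or_eq_zero with hb | h0
      · exfalso
        set e := LinearEquiv.ofBijective g hb
        have he : (e.symm.toLinearMap : X →ₗ[A] Y) = 0 := h _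
        have : Nontrivial X := IsSimpleModule.nontrivial (R := A) (M := X)
        obtain ⟨x, hx⟩ := exists_ne (0 : X)
        apply hx
        have : e.symm x = 0 := by simpa using LinearMap.congr_fun he x
        have := congrArg e this
        simpa using this
      · exact h0
    have hs1 : Subsingleton (X →ₗ[A] Y) := ⟨fun a b => by rw [h a, h b]⟩
    have hs2 : Subsingleton (Y →ₗ[A] X) := ⟨fun a b => by rw [h' a, h' b]⟩
    rw [Module.finrank_zero_of_subsingleton, Module.finrank_zero_of_subsingleton]

lemma hdp_add_left [FiniteDimensional k X] [FiniteDimensional k Y]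
    (p q : Submodule A X) (h : IsCompl p q) :
    Module.finrank k (X →ₗ[A] Y) =
      Module.finrank k (↥p →ₗ[A] Y) + Module.finrank k (↥q →ₗ[A] Y) := by
  haveI : FiniteDimensional k ↥p := inferInstanceAs (FiniteDimensional k ↥(p.restrictScalars k))
  haveI : FiniteDimensional k ↥q := inferInstanceAs (FiniteDimensional k ↥(q.restrictScalars k))
  haveI := hdp_fd k A (X := ↥p) (Y := Y)
  haveI := hdp_fd k A (X := ↥q) (Y := Y)
  have e1 := hdpConjEquiv k A (Submodule.prodEquivOfIsCompl p q h).symm (LinearEquiv.refl A Y)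
  have e2 := (LinearMap.coprodEquiv (M := ↥p) (M₂ := ↥q) (M₃ := Y) (R := A) k).symm
  rw [(e1.trans e2).finrank_eq, Module.finrank_prod]

lemma hdp_add_right [FiniteDimensional k X] [FiniteDimensional k Y]
    (p q : Submodule A Y) (h : IsCompl p q) :
    Module.finrank k (X →ₗ[A] Y) =
      Module.finrank k (X →ₗ[A] ↥p) + Module.finrank k (X →ₗ[A] ↥q) := by
  haveI : FiniteDimensional k ↥p := inferInstanceAs (FiniteDimensional k ↥(p.restrictScalars k))
  haveI : FiniteDimensional k ↥q := inferInstanceAs (FiniteDimensional k ↥(q.restrictScalars k))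
  haveI := hdp_fd k A (X := X) (Y := ↥p)
  haveI := hdp_fd k A (X := X) (Y := ↥q)
  have e1 := hdpConjEquiv k A (LinearEquiv.refl A X) (Submodule.prodEquivOfIsCompl p q h).symm
  have e2 := (LinearMap.prodEquiv (M := X) (M₂ := ↥p) (M₃ := ↥q) (R := A) k).symm
  rw [(e1.trans e2).finrank_eq, Module.finrank_prod]

lemma hdp_finrank_compl [FiniteDimensional k X] (p q : Submodule A X) (h : IsCompl p q) :
    Module.finrank k X = Module.finrank k ↥p + Module.finrank k ↥q := by
  haveI : FiniteDimensional k ↥p := inferInstanceAs (FiniteDimensional k ↥(p.restrictScalars k))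
  haveI : FiniteDimensional k ↥q := inferInstanceAs (FiniteDimensional k ↥(q.restrictScalars k))
  have e := ((Submodule.prodEquivOfIsCompl p q h).restrictScalars k).symm
  rw [e.finrank_eq, Module.finrank_prod]

end HDPAux

section HDPMain

variable (k : Type*) [Field k] (A : Type*) [Ring A] [Algebra k A] [IsSemisimpleRing A]

lemma hdp_simple_any (S : Type u) [AddCommGroup S] [Module A S] [Module k S]
    [IsScalarTower k A S] [FiniteDimensional k S] [IsSimpleModule A S] :
    ∀ (n : ℕ) (Y : Type v) [AddCommGroup Y] [Module A Y] [Module k Y]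
      [IsScalarTower k A Y] [FiniteDimensional k Y], Module.finrank k Y ≤ n →
      Module.finrank k (S →ₗ[A] Y) = Module.finrank k (Y →ₗ[A] S) := by
  intro n
  induction n with
  | zero =>
    intro Y _ _ _ _ _ hY
    have : Module.finrank k Y = 0 := Nat.le_zero.mp hY
    have hsub : Subsingleton Y := Module.finrank_zero_iff.mp this
    haveI := hdp_sub_right (A := A) (X := S) (Y := Y)
    haveI := hdp_sub_left (A := A) (X := Y) (Y := S)
    rw [Module.finrank_zero_of_subsingleton, Module.finrank_zero_of_subsingleton]
  | succ n ih =>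
    intro Y _ _ _ _ _ hY
    by_cases hsub : Subsingleton Y
    · haveI := hdp_sub_right (A := A) (X := S) (Y := Y)
      haveI := hdp_sub_left (A := A) (X := Y) (Y := S)
      rw [Module.finrank_zero_of_subsingleton, Module.finrank_zero_of_subsingleton]
    · have : Nontrivial Y := not_subsingleton_iff_nontrivial.mp hsub
      obtain ⟨T, hTs⟩ := IsSemisimpleModule.exists_simple_submodule A Y
      haveI := hTs
      obtain ⟨C, hC⟩ := exists_isCompl T
      haveI : FiniteDimensional k ↥T :=
        inferInstanceAs (FiniteDimensional k ↥(T.restrictScalars k))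
      haveI : FiniteDimensional k ↥C :=
        inferInstanceAs (FiniteDimensional k ↥(C.restrictScalars k))
      have hd := hdp_finrank_compl k A (X := Y) T C hC
      haveI : Nontrivial ↥T := IsSimpleModule.nontrivial (R := A) (M := ↥T)
      have hTpos : 0 < Module.finrank k ↥T := Module.finrank_pos
      have hCn : Module.finrank k ↥C ≤ n := by omega
      rw [hdp_add_right k A (X := S) T C hC, hdp_add_left k A (Y := S) T C hC,
        hdp_simple_simple k A (X := S) (Y := ↥T), ih ↥C hCn]

lemma hdp_finrank_symm :
    ∀ (n : ℕ) (X : Type u) [AddCommGroup X] [Module A X] [Module k X]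
      [IsScalarTower k A X] [FiniteDimensional k X], Module.finrank k X ≤ n →
      ∀ (Y : Type v) [AddCommGroup Y] [Module A Y] [Module k Y]
      [IsScalarTower k A Y] [FiniteDimensional k Y],
      Module.finrank k (X →ₗ[A] Y) = Module.finrank k (Y →ₗ[A] X) := by
  intro n
  induction n with
  | zero =>
    intro X _ _ _ _ _ hX Y _ _ _ _ _
    have hsub : Subsingleton X := Module.finrank_zero_iff.mp (Nat.le_zero.mp hX)
    haveI := hdp_sub_left (A := A) (X := X) (Y := Y)
    haveI := hdp_sub_right (A := A) (X := Y) (Y := X)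
    rw [Module.finrank_zero_of_subsingleton, Module.finrank_zero_of_subsingleton]
  | succ n ih =>
    intro X _ _ _ _ _ hX Y _ _ _ _ _
    by_cases hsub : Subsingleton X
    · haveI := hdp_sub_left (A := A) (X := X) (Y := Y)
      haveI := hdp_sub_right (A := A) (X := Y) (Y := X)
      rw [Module.finrank_zero_of_subsingleton, Module.finrank_zero_of_subsingleton]
    · have : Nontrivial X := not_subsingleton_iff_nontrivial.mp hsub
      obtain ⟨S, hSs⟩ := IsSemisimpleModule.exists_simple_submodule A X
      haveI := hSs
      obtain ⟨C, hC⟩ := exists_isCompl S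
      haveI : FiniteDimensional k ↥S :=
        inferInstanceAs (FiniteDimensional k ↥(S.restrictScalars k))
      haveI : FiniteDimensional k ↥C :=
        inferInstanceAs (FiniteDimensional k ↥(C.restrictScalars k))
      have hd := hdp_finrank_compl k A (X := X) S C hC
      haveI : Nontrivial ↥S := IsSimpleModule.nontrivial (R := A) (M := ↥S)
      have hSpos : 0 < Module.finrank k ↥S := Module.finrank_pos
      have hCn : Module.finrank k ↥C ≤ n := by omega
      rw [hdp_add_left k A (Y := Y) S C hC, hdp_add_right k A (X := Y) S C hC,
        hdp_simple_any k A ↥S (Module.finrank k Y) Y le_rfl, ih ↥C hCn Y]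

end HDPMain

/-- Over a finite-dimensional semisimple algebra `A` over a field `k`, for
finite-dimensional modules `X` and `Y` the spaces `Hom_A(X, Y)` and
`Hom_A(Y, X)` are naturally dual: there is a `k`-bilinear pairing
`Hom_A(X, Y) × Hom_A(Y, X) → k` which is nondegenerate in both arguments
(equivalently, `Hom_A(X, Y)` is `k`-linearly isomorphic to the dual of
`Hom_A(Y, X)`). -/
theorem hom_dual_pairing
    (k : Type*) [Field k] (A : Type*) [Ring A] [Algebra k A]
    [FiniteDimensional k A] [IsSemisimpleRing A]
    (X : Type*) [AddCommGroup X] [Module A X] [Module k X]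
    [IsScalarTower k A X] [FiniteDimensional k X]
    (Y : Type*) [AddCommGroup Y] [Module A Y] [Module k Y]
    [IsScalarTower k A Y] [FiniteDimensional k Y] :
    ∃ β : (X →ₗ[A] Y) →ₗ[k] (Y →ₗ[A] X) →ₗ[k] k,
      (∀ f : X →ₗ[A] Y, (∀ g : Y →ₗ[A] X, β f g = 0) → f = 0) ∧
      (∀ g : Y →ₗ[A] X, (∀ f : X →ₗ[A] Y, β f g = 0) → g = 0) := by
  haveI fd1 := hdp_fd k A (X := X) (Y := Y)
  haveI fd2 := hdp_fd k A (X := Y) (Y := X)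
  have hrank : Module.finrank k (X →ₗ[A] Y) =
      Module.finrank k (Module.Dual k (Y →ₗ[A] X)) := by
    rw [Subspace.dual_finrank_eq]
    exact hdp_finrank_symm k A (Module.finrank k X) X le_rfl Y
  have e : (X →ₗ[A] Y) ≃ₗ[k] Module.Dual k (Y →ₗ[A] X) :=
    LinearEquiv.ofFinrankEq _ _ hrank
  refine ⟨e.toLinearMap, fun f hf => ?_, fun g hg => ?_⟩
  · have : e f = 0 := by ext g; exact hf g
    simpa using e.injective (by rw [this, map_zero])
  · rw [← Module.forall_dual_apply_eq_zero_iff k g]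
    intro φ
    have := hg (e.symm φ)
    simpa using this
end

section
/- Let k be a field, A a finite-dimensional semisimple k-algebra, and X, Y finite-dimensional left A-modules (with compatible k-structure). Then dim_k Hom_A(X, Y) = dim_k Hom_A(Y, X). -/
open Module

section Aux

variable (k : Type*) [Field k] (A : Type*) [Ring A] [Algebra k A]

/-- Conjugating homs by `A`-linear equivalences, as a `k`-linear equivalence. -/
def homCongrAux {M M' N N' : Type*}
    [AddCommGroup M] [Module A M]
    [AddCommGroup M'] [Module A M']
    [AddCommGroup N] [Module A N] [Module k N] [IsScalarTower k A N]
    [AddCommGroup N'] [Module A N'] [Module k N'] [IsScalarTower k A N']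
    (e₁ : M ≃ₗ[A] M') (e₂ : N ≃ₗ[A] N') :
    (M →ₗ[A] N) ≃ₗ[k] (M' →ₗ[A] N') where
  toFun f := e₂.toLinearMap ∘ₗ f ∘ₗ e₁.symm.toLinearMap
  invFun f := e₂.symm.toLinearMap ∘ₗ f ∘ₗ e₁.toLinearMap
  map_add' f g := by ext x; simp
  map_smul' c f := by
    ext x
    simp only [LinearMap.comp_apply, LinearMap.smul_apply, RingHom.id_apply,
      LinearEquiv.coe_coe]
    rw [← algebraMap_smul A c (f (e₁.symm x)), map_smul, algebraMap_smul,
      ← algebraMap_smul A c ((e₂ (f (e₁.symm x)))), algebraMap_smul]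
  left_inv f := by ext x; simp
  right_inv f := by ext x; simp

variable {k A}

theorem fd_hom {M N : Type*}
    [AddCommGroup M] [Module A M] [Module k M] [IsScalarTower k A M] [FiniteDimensional k M]
    [AddCommGroup N] [Module A N] [Module k N] [IsScalarTower k A N] [FiniteDimensional k N] :
    FiniteDimensional k (M →ₗ[A] N) :=
  FiniteDimensional.of_injective
    (LinearMap.restrictScalarsₗ k A M N k) (LinearMap.restrictScalars_injective k)

theorem hom_subsingleton_left {M N : Type*} [Subsingleton M]
    [AddCommGroup M] [Module A M] [AddCommGroup N] [Module A N] :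
    Subsingleton (M →ₗ[A] N) :=
  ⟨fun f g => by ext x; rw [Subsingleton.elim x 0, map_zero, map_zero]⟩

theorem hom_subsingleton_right {M N : Type*} [Subsingleton N]
    [AddCommGroup M] [Module A M] [AddCommGroup N] [Module A N] :
    Subsingleton (M →ₗ[A] N) :=
  ⟨fun f g => by ext x; exact Subsingleton.elim _ _⟩

/-- The simple-simple case. -/
theorem aux_simple_simple {S T : Type*}
    [AddCommGroup S] [Module A S] [Module k S] [IsScalarTower k A S]
    [AddCommGroup T] [Module A T] [Module k T] [IsScalarTower k A T]
    [IsSimpleModule A S] [IsSimpleModule A T] :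
    finrank k (S →ₗ[A] T) = finrank k (T →ₗ[A] S) := by
  by_cases h : ∃ f : S →ₗ[A] T, f ≠ 0
  · obtain ⟨f, hf⟩ := h
    have e : S ≃ₗ[A] T := LinearEquiv.ofBijective f (f.bijective_of_ne_zero hf)
    exact (homCongrAux k A e e.symm).finrank_eq
  · push_neg at h
    have h1 : Subsingleton (S →ₗ[A] T) := ⟨fun f g => by rw [h f, h g]⟩
    have h2 : Subsingleton (T →ₗ[A] S) := by
      refine subsingleton_of_forall_eq 0 fun g => by_contra fun hg => ?_
      have e : T ≃ₗ[A] S := LinearEquiv.ofBijective g (g.bijective_of_ne_zero hg)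
      have : Nontrivial S := IsSimpleModule.nontrivial A S
      obtain ⟨x, hx⟩ := exists_ne (0 : S)
      have h0 := h e.symm.toLinearMap
      have h1 := congrArg (fun (φ : S →ₗ[A] T) => e (φ x)) h0
      simp at h1
      exact hx h1
    rw [finrank_zero_of_subsingleton, finrank_zero_of_subsingleton]

/-- The simple-general case, by induction on dimension. -/
theorem aux_simple {S : Type*}
    [AddCommGroup S] [Module A S] [Module k S] [IsScalarTower k A S] [FiniteDimensional k S]
    [IsSimpleModule A S] [IsSemisimpleRing A] (n : ℕ) :
    ∀ (Y : Type*) [AddCommGroup Y] [Module A Y] [Module k Y]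
      [IsScalarTower k A Y] [FiniteDimensional k Y], finrank k Y ≤ n →
      finrank k (S →ₗ[A] Y) = finrank k (Y →ₗ[A] S) := by
  induction n with
  | zero =>
    intro Y _ _ _ _ _ hY
    have : Subsingleton Y := by
      have := finrank_zero_iff (R := k) (M := Y) |>.mp (Nat.le_zero.mp hY)
      infer_instance
    have := hom_subsingleton_left (A := A) (M := Y) (N := S)
    have := hom_subsingleton_right (A := A) (M := S) (N := Y)
    rw [finrank_zero_of_subsingleton, finrank_zero_of_subsingleton]
  | succ n ih =>
    intro Y _ _ _ _ _ hY
    rcases subsingleton_or_nontrivial Y with hYs | hYn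
    · have := hom_subsingleton_left (A := A) (M := Y) (N := S)
      have := hom_subsingleton_right (A := A) (M := S) (N := Y)
      rw [finrank_zero_of_subsingleton, finrank_zero_of_subsingleton]
    · obtain ⟨m, hm⟩ := IsSemisimpleModule.exists_simple_submodule A Y
      obtain ⟨c, hc⟩ := exists_isCompl m
      haveI : IsSimpleModule A m := hm
      haveI : FiniteDimensional k m :=
        FiniteDimensional.of_injective (m.subtype.restrictScalars k) m.injective_subtype
      haveI : FiniteDimensional k c :=
        FiniteDimensional.of_injective (c.subtype.restrictScalars k) c.injective_subtype
      haveI := fd_hom (k := k) (A := A) (M := S) (N := ↥m)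
      haveI := fd_hom (k := k) (A := A) (M := S) (N := ↥c)
      haveI := fd_hom (k := k) (A := A) (M := ↥m) (N := S)
      haveI := fd_hom (k := k) (A := A) (M := ↥c) (N := S)
      have e : (↥m × c) ≃ₗ[A] Y := Submodule.prodEquivOfIsCompl m c hc
      have hdim : finrank k m + finrank k c = finrank k Y := by
        rw [← (e.restrictScalars k).finrank_eq, finrank_prod]
      have hmpos : 0 < finrank k m := by
        haveI : Nontrivial m := IsSimpleModule.nontrivial A m
        exact finrank_pos
      have hcle : finrank k c ≤ n := by omega
      have h1 : finrank k (S →ₗ[A] Y) =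
          finrank k (S →ₗ[A] m) + finrank k (S →ₗ[A] c) := by
        rw [← (homCongrAux k A (LinearEquiv.refl A S) e).finrank_eq,
          ← (LinearMap.prodEquiv (R := A) (S := k)).finrank_eq, finrank_prod]
      have h2 : finrank k (Y →ₗ[A] S) =
          finrank k (↥m →ₗ[A] S) + finrank k (↥c →ₗ[A] S) := by
        rw [← (homCongrAux k A e (LinearEquiv.refl A S)).finrank_eq,
          ← (LinearMap.coprodEquiv (R := A) (S := k)).finrank_eq, finrank_prod]
      rw [h1, h2, aux_simple_simple (S := S) (T := ↥m), ih c hcle]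

end Aux

/-- Over a finite-dimensional semisimple algebra `A` over a field `k`, for
finite-dimensional modules `X` and `Y` we have
`dim_k Hom_A(X, Y) = dim_k Hom_A(Y, X)`. -/
theorem finrank_hom_symm
    (k : Type*) [Field k] (A : Type*) [Ring A] [Algebra k A]
    [FiniteDimensional k A] [IsSemisimpleRing A]
    (X : Type*) [AddCommGroup X] [Module A X] [Module k X]
    [IsScalarTower k A X] [FiniteDimensional k X]
    (Y : Type*) [AddCommGroup Y] [Module A Y] [Module k Y]
    [IsScalarTower k A Y] [FiniteDimensional k Y] :
    Module.finrank k (X →ₗ[A] Y) = Module.finrank k (Y →ₗ[A] X) := by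
  suffices h : ∀ (n : ℕ) (X : Type _) [AddCommGroup X] [Module A X] [Module k X]
      [IsScalarTower k A X] [FiniteDimensional k X], finrank k X ≤ n →
      finrank k (X →ₗ[A] Y) = finrank k (Y →ₗ[A] X) from h (finrank k X) X le_rfl
  intro n
  induction n with
  | zero =>
    intro X _ _ _ _ _ hX
    have : Subsingleton X := by
      have := finrank_zero_iff (R := k) (M := X) |>.mp (Nat.le_zero.mp hX)
      infer_instance
    have := hom_subsingleton_left (A := A) (M := X) (N := Y)
    have := hom_subsingleton_right (A := A) (M := Y) (N := X)
    rw [finrank_zero_of_subsingleton, finrank_zero_of_subsingleton]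
  | succ n ih =>
    intro X _ _ _ _ _ hX
    rcases subsingleton_or_nontrivial X with hXs | hXn
    · have := hom_subsingleton_left (A := A) (M := X) (N := Y)
      have := hom_subsingleton_right (A := A) (M := Y) (N := X)
      rw [finrank_zero_of_subsingleton, finrank_zero_of_subsingleton]
    · obtain ⟨m, hm⟩ := IsSemisimpleModule.exists_simple_submodule A X
      obtain ⟨c, hc⟩ := exists_isCompl m
      haveI : IsSimpleModule A m := hm
      haveI : FiniteDimensional k m :=
        FiniteDimensional.of_injective (m.subtype.restrictScalars k) m.injective_subtype
      haveI : FiniteDimensional k c :=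
        FiniteDimensional.of_injective (c.subtype.restrictScalars k) c.injective_subtype
      haveI := fd_hom (k := k) (A := A) (M := ↥m) (N := Y)
      haveI := fd_hom (k := k) (A := A) (M := ↥c) (N := Y)
      haveI := fd_hom (k := k) (A := A) (M := Y) (N := ↥m)
      haveI := fd_hom (k := k) (A := A) (M := Y) (N := ↥c)
      have e : (↥m × c) ≃ₗ[A] X := Submodule.prodEquivOfIsCompl m c hc
      have hdim : finrank k m + finrank k c = finrank k X := by
        rw [← (e.restrictScalars k).finrank_eq, finrank_prod]
      have hmpos : 0 < finrank k m := by
        haveI : Nontrivial m := IsSimpleModule.nontrivial A m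
        exact finrank_pos
      have hcle : finrank k c ≤ n := by omega
      have h1 : finrank k (X →ₗ[A] Y) =
          finrank k (↥m →ₗ[A] Y) + finrank k (↥c →ₗ[A] Y) := by
        rw [← (homCongrAux k A e (LinearEquiv.refl A Y)).finrank_eq,
          ← (LinearMap.coprodEquiv (R := A) (S := k)).finrank_eq, finrank_prod]
      have h2 : finrank k (Y →ₗ[A] X) =
          finrank k (Y →ₗ[A] m) + finrank k (Y →ₗ[A] c) := by
        rw [← (homCongrAux k A (LinearEquiv.refl A Y) e).finrank_eq,
          ← (LinearMap.prodEquiv (R := A) (S := k)).finrank_eq, finrank_prod]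
      rw [h1, h2, aux_simple (S := ↥m) (finrank k Y) Y le_rfl, ih c hcle]
end
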